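/- Let E be an order complete vector lattice with weak unit, F a conditional expectation operator on E (an order continuous strictly positive positive linear projection with order complete range containing the weak unit), f : ℝ^n → ℝ a continuous convex function, and X = (X_1,…,X_n) ∈ E^n such that f(X) ∈ E (functional calculus). Then F(f(X)) ≥ f(F X_1, …, F X_n). -/

import Mathlib

open Set

/-- Supporting affine minorant for a continuous convex function on `ℝⁿ`. -/
lemma exists_support_aux {n : ℕ} (f : (Fin n → ℝ) → ℝ)
    (hconv : ConvexOn ℝ Set.univ f) (hcont : Continuous f) (y : Fin n → ℝ) :
    ∃ L : (Fin n → ℝ) →ₗ[ℝ] ℝ, ∀ x, f y + L x - L y ≤ f x := by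
  set S : Set ((Fin n → ℝ) × ℝ) := {p | f p.1 < p.2} with hS
  have hopen : IsOpen S := isOpen_lt (hcont.comp continuous_fst) continuous_snd
  have hconvS : Convex ℝ S := by
    rintro ⟨x₁, t₁⟩ h₁ ⟨x₂, t₂⟩ h₂ a b ha hb hab
    simp only [hS, mem_setOf_eq] at h₁ h₂ ⊢
    rcases eq_or_lt_of_le ha with rfl | ha'
    · simpa [show b = 1 by linarith] using h₂
    rcases eq_or_lt_of_le hb with rfl | hb'
    · simpa [show a = 1 by linarith] using h₁
    have := hconv.2 (mem_univ x₁) (mem_univ x₂) ha hb hab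
    calc f (a • x₁ + b • x₂) ≤ a * f x₁ + b * f x₂ := this
      _ < a * t₁ + b * t₂ := by
          have := mul_lt_mul_of_pos_left h₁ ha'
          have := mul_lt_mul_of_pos_left h₂ hb'
          linarith
  have hy : (y, f y) ∉ S := by simp [hS]
  obtain ⟨φ, hφ⟩ := geometric_hahn_banach_open_point hconvS hopen hy
  set c : ℝ := φ (0, 1) with hc
  have hsplit : ∀ x t, φ (x, t) = φ (x, 0) + t * c := by
    intro x t
    have : (x, t) = (x, (0 : ℝ)) + t • ((0 : Fin n → ℝ), (1 : ℝ)) := by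
      simp [Prod.ext_iff]
    rw [this, map_add, map_smul]
    ring_nf
    simp [hc]
    ring
  have hcneg : c < 0 := by
    have h1 : φ (y, f y + 1) < φ (y, f y) := hφ _ (by simp [hS])
    rw [hsplit y (f y + 1), hsplit y (f y)] at h1
    linarith
  have hc0 : c ≠ 0 := ne_of_lt hcneg
  clear_value c
  have key : ∀ x, φ (x, 0) + f x * c ≤ φ (y, 0) + f y * c := by
    intro x
    refine le_of_forall_pos_lt_add fun ε hε => ?_
    have hδ : 0 < ε / (-c) := div_pos hε (by linarith)
    have h2 := hφ (x, f x + ε / (-c)) (show f x < f x + ε / (-c) by linarith)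
    rw [hsplit x _, hsplit y _] at h2
    have he : (f x + ε / (-c)) * c = f x * c - ε := by
      rw [add_mul, div_mul_eq_mul_div, mul_div_assoc, div_neg, div_self hc0]; ring
    rw [he] at h2
    linarith
  refine ⟨(-(1/c)) • ((φ : ((Fin n → ℝ) × ℝ) →ₗ[ℝ] ℝ).comp (LinearMap.inl ℝ (Fin n → ℝ) ℝ)), ?_⟩
  intro x
  have h1 := key x
  have hd : (0:ℝ) < -(1/c) := neg_pos.mpr (one_div_neg.mpr hcneg)
  have e1 : -(1/c) * (φ (x, 0) + f x * c) = -(1/c) * φ (x, 0) - f x := by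
    field_simp; ring
  have e2 : -(1/c) * (φ (y, 0) + f y * c) = -(1/c) * φ (y, 0) - f y := by
    field_simp; ring
  have h3 : -(1/c) * φ (x, 0) - f x ≤ -(1/c) * φ (y, 0) - f y := by
    rw [← e1, ← e2]; exact mul_le_mul_of_nonneg_left h1 hd.le
  simp only [LinearMap.smul_apply, LinearMap.coe_comp, Function.comp_apply,
    LinearMap.inl_apply, ContinuousLinearMap.coe_coe, smul_eq_mul]
  linarith

theorem stmt_8 {K : Type*} {n : ℕ}
    (F : (K → ℝ) →ₗ[ℝ] (K → ℝ))
    (hproj : ∀ x, F (F x) = F x)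
    (hmono : Monotone F)
    (hstrict : ∀ x : K → ℝ, 0 ≤ x → x ≠ 0 → F x ≠ 0)
    (hunit : F 1 = 1)
    (hoc : ∀ (g : ℕ → K → ℝ) (h : K → ℝ), Monotone g →
      IsLUB (Set.range g) h → IsLUB (Set.range fun m => F (g m)) (F h))
    (f : (Fin n → ℝ) → ℝ) (hconv : ConvexOn ℝ Set.univ f) (hcont : Continuous f)
    (X : Fin n → K → ℝ) :
    (fun ω => f (fun i => F (X i) ω)) ≤ F (fun ω => f (fun i => X i ω)) := by
  intro ω
  set y : Fin n → ℝ := fun i => F (X i) ω with hy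
  obtain ⟨L, hL⟩ := exists_support_aux f hconv hcont y
  set b : Fin n → ℝ := fun i => L (Pi.single i 1) with hb
  have hLsum : ∀ x : Fin n → ℝ, L x = ∑ i, x i * b i := by
    intro x
    have h0 := L.pi_apply_eq_sum_univ x
    simp only [hb]
    rw [h0]
    refine Finset.sum_congr rfl fun i _ => ?_
    have : (fun j => if i = j then (1:ℝ) else 0) = Pi.single i 1 := by
      funext j
      simp [Pi.single_apply, eq_comm]
    rw [smul_eq_mul, this]
  set g : K → ℝ := (f y - L y) • (1 : K → ℝ) + ∑ i, b i • X i with hg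
  have hFg : F g = (f y - L y) • (1 : K → ℝ) + ∑ i, b i • F (X i) := by
    rw [hg, map_add, map_smul, hunit, map_sum]
    simp [map_smul]
  have hle : g ≤ fun ω' => f (fun i => X i ω') := by
    intro ω'
    have h1 := hL (fun i => X i ω')
    rw [hLsum (fun i => X i ω')] at h1
    have hsum : (∑ i, b i • X i) ω' = ∑ i, X i ω' * b i := by
      simp [Finset.sum_apply, mul_comm]
    simp only [hg, Pi.add_apply, Pi.smul_apply, Pi.one_apply, smul_eq_mul, hsum]
    linarith
  have h2 := hmono hle ω
  have h3 : F g ω = f y := by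
    rw [hFg]
    have : (∑ i, b i • F (X i)) ω = ∑ i, y i * b i := by
      simp [Finset.sum_apply, hy, mul_comm]
    simp only [Pi.add_apply, Pi.smul_apply, Pi.one_apply, smul_eq_mul, this]
    rw [hLsum y]
    ring
  calc f (fun i => F (X i) ω) = f y := by rw [hy]
    _ = F g ω := h3.symm
    _ ≤ F (fun ω' => f fun i => X i ω') ω := h2
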